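/- Let d ≥ 1 be a natural number and let ℝ^d denote EuclideanSpace ℝ (Fin d) with Lebesgue measure. There exists a constant C > 0, depending only on d, such that for every measure space (X, μ), every measurable g : X × ℝ^d → ℝ, and all constants C₀ > 0, C₁ ≥ 0 with 0 ≤ g(x, v) ≤ C₀ for almost every (x, v) and ∫_X ∫_{ℝ^d} ‖v‖² g(x, v) dv dμ(x) ≤ C₁, the mass density ρ_g(x) := ∫_{ℝ^d} g(x, v) dv satisfies ‖ρ_g‖_{L^{(d+2)/d}(X, μ)} ≤ C · C₀^{2/(d+2)} · C₁^{d/(d+2)}. -/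

import Mathlib

open MeasureTheory ENNReal Filter

/-- A bounded distribution function with finite kinetic energy has mass density in
`L^{(d+2)/d}` (Lemma 5.2): `‖ρ_g‖_{L^{(d+2)/d}(X,μ)} ≤ C · C₀^{2/(d+2)} · C₁^{d/(d+2)}`. -/

lemma opt_bound (d : ℕ) (hd : 1 ≤ d) (A B F : ℝ≥0∞) (hA0 : A ≠ 0) (hAt : A ≠ ∞)
    (h : ∀ R : ℝ≥0∞, R ≠ 0 → R ≠ ∞ → F ≤ A * R ^ (d : ℝ) + R ^ (-(2:ℝ)) * B) :
    F ≤ 2 * A ^ (2 / ((d:ℝ) + 2)) * B ^ ((d:ℝ) / ((d:ℝ) + 2)) := by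
  have hd0 : (0:ℝ) < d := by exact_mod_cast hd
  have hP : (0:ℝ) < (d:ℝ) + 2 := by linarith
  by_cases hBt : B = ∞
  · have h2 : 2 * A ^ (2 / ((d:ℝ) + 2)) ≠ 0 := by
      refine mul_ne_zero (by norm_num) ?_
      simp [ENNReal.rpow_eq_zero_iff, hA0, hAt]
    rw [hBt, ENNReal.top_rpow_of_pos (by positivity), ENNReal.mul_top h2]
    exact le_top
  by_cases hB0 : B = 0
  · have hF : F = 0 := by
      have key : ∀ n : ℕ, F ≤ A * (ENNReal.ofReal ((n+1:ℝ)⁻¹)) ^ (d:ℝ) := by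
        intro n
        have hn : (0:ℝ) < (n+1:ℝ)⁻¹ := inv_pos.2 (by positivity)
        have := h (ENNReal.ofReal ((n+1:ℝ)⁻¹)) (by simp only [ne_eq, ENNReal.ofReal_eq_zero, not_le]; exact hn) (by simp)
        simpa [hB0] using this
      have h1 : Tendsto (fun n : ℕ => ENNReal.ofReal ((n+1:ℝ)⁻¹)) atTop (nhds 0) := by
        have := (ENNReal.continuous_ofReal.tendsto 0).comp
          tendsto_one_div_add_atTop_nhds_zero_nat
        simpa [Function.comp_def, one_div] using this
      have tendsto0 := (ENNReal.tendsto_const_mul_rpow_nhds_zero_of_pos hAt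
        (by positivity : (0:ℝ) < d)).comp h1
      have := ge_of_tendsto' tendsto0 key
      exact le_antisymm (by simpa [Function.comp_def] using this) zero_le
    simp [hF]
  · -- main case : 0 < B < ∞
    set P : ℝ := (d:ℝ) + 2 with hPdef
    set a : ℝ≥0∞ := A ^ P⁻¹ with ha
    set b : ℝ≥0∞ := B ^ P⁻¹ with hb
    have ha0 : a ≠ 0 := by simp [ha, ENNReal.rpow_eq_zero_iff, hA0, hAt]
    have hat : a ≠ ∞ := by simp [ha, ENNReal.rpow_eq_top_iff, hA0, hAt]
    have hb0 : b ≠ 0 := by simp [hb, ENNReal.rpow_eq_zero_iff, hB0, hBt]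
    have hbt : b ≠ ∞ := by simp [hb, ENNReal.rpow_eq_top_iff, hB0, hBt]
    set R : ℝ≥0∞ := b * a⁻¹ with hR
    have hR0 : R ≠ 0 := mul_ne_zero hb0 (ENNReal.inv_ne_zero.2 hat)
    have hRt : R ≠ ∞ := ENNReal.mul_ne_top hbt (ENNReal.inv_ne_top.2 ha0)
    have hPne : P ≠ 0 := ne_of_gt hP
    have hA : A = a ^ P := by
      rw [ha, ← ENNReal.rpow_mul, inv_mul_cancel₀ hPne, ENNReal.rpow_one]
    have hB : B = b ^ P := by
      rw [hb, ← ENNReal.rpow_mul, inv_mul_cancel₀ hPne, ENNReal.rpow_one]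
    -- compute the two terms
    have hRd : R ^ (d:ℝ) = b ^ (d:ℝ) * (a ^ (d:ℝ))⁻¹ := by
      rw [hR, ENNReal.mul_rpow_of_nonneg _ _ hd0.le, ENNReal.inv_rpow]
    have e1 : a ^ (2:ℝ) = A ^ (2 / P) := by
      rw [ha, ← ENNReal.rpow_mul]; congr 1; rw [div_eq_mul_inv, mul_comm]
    have e2 : b ^ (d:ℝ) = B ^ ((d:ℝ) / P) := by
      rw [hb, ← ENNReal.rpow_mul]; congr 1; rw [div_eq_mul_inv, mul_comm]
    have term1 : A * R ^ (d:ℝ) = a ^ (2:ℝ) * b ^ (d:ℝ) := by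
      rw [hRd, hA, mul_comm (b ^ (d:ℝ)), ← mul_assoc]
      congr 1
      rw [← ENNReal.rpow_neg, ← ENNReal.rpow_add _ _ ha0 hat]
      congr 1
      rw [hPdef]; ring
    have hR2 : R ^ (2:ℝ) = b ^ (2:ℝ) * (a ^ (2:ℝ))⁻¹ := by
      rw [hR, ENNReal.mul_rpow_of_nonneg _ _ (by norm_num : (0:ℝ) ≤ 2), ENNReal.inv_rpow]
    have term2 : R ^ (-(2:ℝ)) * B = a ^ (2:ℝ) * b ^ (d:ℝ) := by
      rw [ENNReal.rpow_neg, hR2, ENNReal.mul_inv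
        (Or.inl (by simp [ENNReal.rpow_eq_zero_iff, hb0, hbt]))
        (Or.inl (by simp [ENNReal.rpow_eq_top_iff, hb0, hbt])), inv_inv, hB,
        mul_comm ((b ^ (2:ℝ))⁻¹) (a ^ (2:ℝ)), mul_assoc]
      congr 1
      rw [← ENNReal.rpow_neg, ← ENNReal.rpow_add _ _ hb0 hbt]
      congr 1
      rw [hPdef]; ring
    have hfin := h R hR0 hRt
    rw [term1, term2, ← two_mul, e1, e2] at hfin
    simpa [mul_assoc] using hfin

theorem density_Lp_from_energy (d : ℕ) (hd : 1 ≤ d) :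
    ∃ C : ℝ, 0 < C ∧
      ∀ (X : Type) [MeasurableSpace X], ∀ μ : Measure X,
      ∀ g : X × EuclideanSpace ℝ (Fin d) → ℝ, Measurable g →
      ∀ C₀ C₁ : ℝ, 0 < C₀ → 0 ≤ C₁ →
      (∀ᵐ p ∂(μ.prod (volume : Measure (EuclideanSpace ℝ (Fin d)))), 0 ≤ g p ∧ g p ≤ C₀) →
      (∫⁻ x, (∫⁻ v : EuclideanSpace ℝ (Fin d),
          (‖v‖₊ : ℝ≥0∞) ^ (2 : ℝ) * ENNReal.ofReal (g (x, v))) ∂μ) ≤ ENNReal.ofReal C₁ →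
      (∫⁻ x, (∫⁻ v : EuclideanSpace ℝ (Fin d),
            ENNReal.ofReal (g (x, v))) ^ (((d : ℝ) + 2) / d) ∂μ) ^ ((d : ℝ) / ((d : ℝ) + 2)) ≤
        ENNReal.ofReal (C * C₀ ^ (2 / ((d : ℝ) + 2)) * C₁ ^ ((d : ℝ) / ((d : ℝ) + 2))) := by
  haveI : Nonempty (Fin d) := ⟨⟨0, hd⟩⟩
  have hd0 : (0:ℝ) < d := by exact_mod_cast hd
  have hP : (0:ℝ) < (d:ℝ) + 2 := by linarith
  set E : Type := EuclideanSpace ℝ (Fin d)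
  set Vb : ℝ≥0∞ := volume (Metric.ball (0:E) 1) with hVb
  have hVb0 : Vb ≠ 0 := (Metric.measure_ball_pos volume 0 one_pos).ne'
  have hVbt : Vb ≠ ∞ := measure_ball_lt_top.ne
  set Vr : ℝ := Vb.toReal with hVr
  have hVr0 : 0 < Vr := ENNReal.toReal_pos hVb0 hVbt
  refine ⟨2 * Vr ^ (2 / ((d:ℝ) + 2)), by positivity, ?_⟩
  intro X _ μ g hg C₀ C₁ hC₀ hC₁ hae hE
  set P : ℝ := (d:ℝ) + 2 with hPdef
  set A : ℝ≥0∞ := ENNReal.ofReal C₀ * Vb with hA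
  have hA0 : A ≠ 0 := mul_ne_zero (by simp [hC₀]) hVb0
  have hAt : A ≠ ∞ := ENNReal.mul_ne_top ENNReal.ofReal_ne_top hVbt
  set Ek : X → ℝ≥0∞ := fun x => ∫⁻ v : E, (‖v‖₊ : ℝ≥0∞) ^ (2:ℝ) * ENNReal.ofReal (g (x, v))
    with hEk
  set F : X → ℝ≥0∞ := fun x => ∫⁻ v : E, ENNReal.ofReal (g (x, v)) with hF
  -- pointwise bound
  have pt : ∀ᵐ x ∂μ, F x ≤ 2 * A ^ (2 / P) * (Ek x) ^ ((d:ℝ) / P) := by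
    filter_upwards [Measure.ae_ae_of_ae_prod hae] with x hx
    refine opt_bound d hd A (Ek x) (F x) hA0 hAt ?_
    intro R hR0 hRt
    set r : ℝ := R.toReal with hr
    have hrpos : 0 < r := ENNReal.toReal_pos hR0 hRt
    have hRr : ENNReal.ofReal r = R := ENNReal.ofReal_toReal hRt
    have hsplit := (lintegral_add_compl (μ := (volume : Measure E))
      (fun v : E => ENNReal.ofReal (g (x, v)))
      (measurableSet_ball (x := (0:E)) (ε := r))).symm
    rw [hF]
    calc ∫⁻ v : E, ENNReal.ofReal (g (x, v))
        = (∫⁻ v in Metric.ball (0:E) r, ENNReal.ofReal (g (x, v))) +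
          ∫⁻ v in (Metric.ball (0:E) r)ᶜ, ENNReal.ofReal (g (x, v)) := hsplit
      _ ≤ A * R ^ (d:ℝ) + R ^ (-(2:ℝ)) * Ek x := by
          gcongr
          · -- ball term
            calc (∫⁻ v in Metric.ball (0:E) r, ENNReal.ofReal (g (x, v)))
                ≤ ∫⁻ _ in Metric.ball (0:E) r, ENNReal.ofReal C₀ := by
                  refine lintegral_mono_ae ?_
                  exact (ae_restrict_of_ae hx).mono fun v hv => ENNReal.ofReal_le_ofReal hv.2
              _ = ENNReal.ofReal C₀ * volume (Metric.ball (0:E) r) := setLIntegral_const _ _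
              _ = A * R ^ (d:ℝ) := by
                  rw [Measure.addHaar_ball volume (0:E) hrpos.le, finrank_euclideanSpace_fin,
                    ← Real.rpow_natCast r d,
                    ← ENNReal.ofReal_rpow_of_nonneg hrpos.le (by positivity : (0:ℝ) ≤ (d:ℝ)),
                    hRr, hA]
                  ring
          · -- complement term
            have hR2 : R ^ (2:ℝ) ≠ 0 := by simp [ENNReal.rpow_eq_zero_iff, hR0, hRt]
            have hR2t : R ^ (2:ℝ) ≠ ∞ := by simp [ENNReal.rpow_eq_top_iff, hR0, hRt]
            calc ∫⁻ v in (Metric.ball (0:E) r)ᶜ, ENNReal.ofReal (g (x, v))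
                ≤ ∫⁻ v in (Metric.ball (0:E) r)ᶜ,
                    R ^ (-(2:ℝ)) * ((‖v‖₊ : ℝ≥0∞) ^ (2:ℝ) * ENNReal.ofReal (g (x, v))) := by
                  refine lintegral_mono_ae ?_
                  filter_upwards [ae_restrict_mem measurableSet_ball.compl] with v hv
                  have hnorm : r ≤ ‖v‖ := by
                    simpa [Metric.mem_ball, dist_zero_right, not_lt] using hv
                  have h2 : R ^ (2:ℝ) ≤ (‖v‖₊ : ℝ≥0∞) ^ (2:ℝ) := by
                    refine ENNReal.rpow_le_rpow ?_ (by norm_num)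
                    rw [← hRr, ← enorm_eq_nnnorm, ← ofReal_norm]
                    exact ENNReal.ofReal_le_ofReal hnorm
                  calc ENNReal.ofReal (g (x, v))
                      = (R ^ (2:ℝ))⁻¹ * (R ^ (2:ℝ) * ENNReal.ofReal (g (x, v))) := by
                        rw [← mul_assoc, ENNReal.inv_mul_cancel hR2 hR2t, one_mul]
                    _ ≤ (R ^ (2:ℝ))⁻¹ * ((‖v‖₊ : ℝ≥0∞) ^ (2:ℝ) * ENNReal.ofReal (g (x, v))) := by
                        gcongr
                    _ = R ^ (-(2:ℝ)) * ((‖v‖₊ : ℝ≥0∞) ^ (2:ℝ) * ENNReal.ofReal (g (x, v))) := by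
                        rw [ENNReal.rpow_neg]
              _ ≤ ∫⁻ v : E, R ^ (-(2:ℝ)) * ((‖v‖₊ : ℝ≥0∞) ^ (2:ℝ) * ENNReal.ofReal (g (x, v))) :=
                  setLIntegral_le_lintegral _ _
              _ = R ^ (-(2:ℝ)) * Ek x := by
                  refine lintegral_const_mul' _ _ ?_
                  rw [ENNReal.rpow_neg]
                  exact ENNReal.inv_ne_top.2 hR2
  -- integrate the pointwise bound
  have h2At : (2:ℝ≥0∞) * A ^ (2 / P) ≠ ∞ :=
    ENNReal.mul_ne_top (by norm_num) (ENNReal.rpow_ne_top_of_nonneg (by positivity) hAt)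
  have pt2 : ∀ᵐ x ∂μ, (F x) ^ (P / (d:ℝ)) ≤ ((2:ℝ≥0∞) * A ^ (2 / P)) ^ (P / (d:ℝ)) * Ek x := by
    filter_upwards [pt] with x hx
    calc (F x) ^ (P / (d:ℝ))
        ≤ ((2:ℝ≥0∞) * A ^ (2 / P) * (Ek x) ^ ((d:ℝ) / P)) ^ (P / (d:ℝ)) :=
          ENNReal.rpow_le_rpow hx (by positivity)
      _ = ((2:ℝ≥0∞) * A ^ (2 / P)) ^ (P / (d:ℝ)) * Ek x := by
          rw [ENNReal.mul_rpow_of_nonneg _ _ (by positivity), ← ENNReal.rpow_mul]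
          have h1 : (d:ℝ) / P * (P / (d:ℝ)) = 1 := by field_simp
          rw [h1, ENNReal.rpow_one]
  have hE' : ∫⁻ x, Ek x ∂μ ≤ ENNReal.ofReal C₁ := hE
  have step : ∫⁻ x, (F x) ^ (P / (d:ℝ)) ∂μ ≤
      ((2:ℝ≥0∞) * A ^ (2 / P)) ^ (P / (d:ℝ)) * ENNReal.ofReal C₁ := by
    calc ∫⁻ x, (F x) ^ (P / (d:ℝ)) ∂μ
        ≤ ∫⁻ x, ((2:ℝ≥0∞) * A ^ (2 / P)) ^ (P / (d:ℝ)) * Ek x ∂μ := lintegral_mono_ae pt2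
      _ = ((2:ℝ≥0∞) * A ^ (2 / P)) ^ (P / (d:ℝ)) * ∫⁻ x, Ek x ∂μ :=
          lintegral_const_mul' _ _ (ENNReal.rpow_ne_top_of_nonneg (by positivity) h2At)
      _ ≤ _ := mul_le_mul_right hE' _
  have final : (∫⁻ x, (F x) ^ (P / (d:ℝ)) ∂μ) ^ ((d:ℝ) / P) ≤
      (2:ℝ≥0∞) * A ^ (2 / P) * (ENNReal.ofReal C₁) ^ ((d:ℝ) / P) := by
    calc (∫⁻ x, (F x) ^ (P / (d:ℝ)) ∂μ) ^ ((d:ℝ) / P)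
        ≤ (((2:ℝ≥0∞) * A ^ (2 / P)) ^ (P / (d:ℝ)) * ENNReal.ofReal C₁) ^ ((d:ℝ) / P) :=
          ENNReal.rpow_le_rpow step (by positivity)
      _ = (2:ℝ≥0∞) * A ^ (2 / P) * (ENNReal.ofReal C₁) ^ ((d:ℝ) / P) := by
          rw [ENNReal.mul_rpow_of_nonneg _ _ (by positivity), ← ENNReal.rpow_mul]
          have h1 : P / (d:ℝ) * ((d:ℝ) / P) = 1 := by field_simp
          rw [h1, ENNReal.rpow_one]
  have hVbr : Vb = ENNReal.ofReal Vr := (ENNReal.ofReal_toReal hVbt).symm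
  have rhs : (2:ℝ≥0∞) * A ^ (2 / P) * (ENNReal.ofReal C₁) ^ ((d:ℝ) / P)
      = ENNReal.ofReal (2 * Vr ^ (2 / P) * C₀ ^ (2 / P) * C₁ ^ ((d:ℝ) / P)) := by
    rw [hA, hVbr, ENNReal.mul_rpow_of_nonneg _ _ (by positivity : (0:ℝ) ≤ 2 / P),
      ENNReal.ofReal_rpow_of_nonneg hC₀.le (by positivity),
      ENNReal.ofReal_rpow_of_nonneg hVr0.le (by positivity),
      ENNReal.ofReal_rpow_of_nonneg hC₁ (by positivity),
      show (2:ℝ≥0∞) = ENNReal.ofReal 2 by norm_num,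
      ← ENNReal.ofReal_mul (Real.rpow_nonneg hC₀.le _),
      ← ENNReal.ofReal_mul (by norm_num : (0:ℝ) ≤ 2),
      ← ENNReal.ofReal_mul (mul_nonneg (by norm_num : (0:ℝ) ≤ 2)
        (mul_nonneg (Real.rpow_nonneg hC₀.le _) (Real.rpow_nonneg hVr0.le _)))]
    congr 1
    ring
  calc (∫⁻ x, (∫⁻ v : E, ENNReal.ofReal (g (x, v))) ^ (P / (d:ℝ)) ∂μ) ^ ((d:ℝ) / P)
      = (∫⁻ x, (F x) ^ (P / (d:ℝ)) ∂μ) ^ ((d:ℝ) / P) := rfl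
    _ ≤ (2:ℝ≥0∞) * A ^ (2 / P) * (ENNReal.ofReal C₁) ^ ((d:ℝ) / P) := final
    _ = _ := by rw [rhs]
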